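/- Assume W != 0, c is even, and let m be the least odd positive integer with alpha_m(W) = 1 (assumed to exist). If c < a+b, a+b is even, and c + m > a+b+1, then alpha_{a+b-c+1}(R) = 1. -/

import Mathlib

open Polynomial

/-- `alpha l S` is the coefficient of `x^(deg S - l)` in `S`. -/
noncomputable def alpha (l : ℕ) (S : Polynomial (ZMod 2)) : ZMod 2 :=
  S.coeff (S.natDegree - l)

/-- `sigmaPow P n = 1 + P + ⋯ + P^n`, the sum of divisors of `P^n` for `P` irreducible. -/
noncomputable def sigmaPow (P : Polynomial (ZMod 2)) (n : ℕ) : Polynomial (ZMod 2) :=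
  ∑ i ∈ Finset.range (n + 1), P ^ i

lemma monicXaXb (a b : ℕ) : (X ^ a * (X + 1) ^ b : Polynomial (ZMod 2)).Monic := by
  have h1 : (X + 1 : Polynomial (ZMod 2)) = X + C 1 := by simp
  exact (monic_X_pow a).mul (by rw [h1]; exact (monic_X_add_C 1).pow b)

lemma degXaXb (a b : ℕ) : (X ^ a * (X + 1) ^ b : Polynomial (ZMod 2)).natDegree = a + b := by
  have h1 : (X + 1 : Polynomial (ZMod 2)) = X + C 1 := by simp
  rw [natDegree_mul (by exact pow_ne_zero _ X_ne_zero)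
    (by rw [h1]; exact pow_ne_zero _ (X_add_C_ne_zero 1)),
    natDegree_pow, natDegree_pow, natDegree_X, h1, natDegree_X_add_C, mul_one, mul_one]

lemma mersDeg (a b : ℕ) (hab : 1 ≤ a + b) :
    (1 + X ^ a * (X + 1) ^ b : Polynomial (ZMod 2)).natDegree = a + b := by
  rw [natDegree_add_eq_right_of_natDegree_lt, degXaXb]
  rw [degXaXb, natDegree_one]; omega

lemma mersMonic (a b : ℕ) (hab : 1 ≤ a + b) :
    (1 + X ^ a * (X + 1) ^ b : Polynomial (ZMod 2)).Monic := by
  refine (monicXaXb a b).add_of_right ?_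
  rw [degree_one, degree_eq_natDegree (monicXaXb a b).ne_zero, degXaXb]
  exact_mod_cast (by omega : 0 < a + b)

lemma mersCoeff (a b k : ℕ) (hk : 1 ≤ a + k) :
    (1 + X ^ a * (X + 1) ^ b : Polynomial (ZMod 2)).coeff (a + k) =
      (b.choose k : ZMod 2) := by
  rw [coeff_add, coeff_one, if_neg (by omega), add_comm a k, coeff_X_pow_mul,
    coeff_X_add_one_pow, zero_add]

lemma sigma_succ (P : Polynomial (ZMod 2)) (n : ℕ) :
    sigmaPow P (n + 1) = sigmaPow P n + P ^ (n + 1) := by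
  unfold sigmaPow; rw [Finset.sum_range_succ]

lemma sigma_deg (M : Polynomial (ZMod 2)) (hM : M.Monic) (hd : 1 ≤ M.natDegree) (n : ℕ) :
    (sigmaPow M n).natDegree = n * M.natDegree := by
  induction n with
  | zero => simp [sigmaPow]
  | succ n ih =>
    rw [sigma_succ, natDegree_add_eq_right_of_natDegree_lt, natDegree_pow]
    rw [natDegree_pow, ih]
    have := hM.pow (n + 1)
    nlinarith

lemma sigma_coeff_high (M : Polynomial (ZMod 2)) (hM : M.Monic) (hd : 1 ≤ M.natDegree)
    (n k : ℕ) (hn : 1 ≤ n) (hk : (n - 1) * M.natDegree < k) :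
    (sigmaPow M n).coeff k = (M ^ n).coeff k := by
  obtain ⟨n', rfl⟩ : ∃ n', n = n' + 1 := ⟨n - 1, by omega⟩
  rw [sigma_succ, coeff_add_eq_right_of_lt]
  rw [sigma_deg M hM hd]
  simpa using hk

lemma oddCast (n : ℕ) (hn : Odd n) : (n : ZMod 2) = 1 := by
  rw [show ((n : ℕ) : ZMod 2) = ((n % 2 : ℕ) : ZMod 2) from (ZMod.natCast_mod n 2).symm,
    Nat.odd_iff.mp hn, Nat.cast_one]

lemma zmod2cases (x : ZMod 2) (hx : x ≠ 1) : x = 0 := by revert hx; revert x; decide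

theorem stmt_18
    (h a b : ℕ) (hh : 2 ≤ h) (hp : Nat.Prime (2 * h + 1))
    (ha : 1 ≤ a) (hb : 1 ≤ b) (hab5 : 5 ≤ a + b)
    (M : Polynomial (ZMod 2)) (hM : M = 1 + X ^ a * (X + 1) ^ b)
    (hMirr : Irreducible M)
    (J : Finset ℕ) (aj bj : ℕ → ℕ)
    (haj : ∀ j ∈ J, 1 ≤ aj j) (hbj : ∀ j ∈ J, 1 ≤ bj j)
    (hMjirr : ∀ j ∈ J, Irreducible (1 + X ^ aj j * (X + 1) ^ bj j : Polynomial (ZMod 2)))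
    (hdistinct : ∀ i ∈ J, ∀ j ∈ J, i ≠ j →
      (1 + X ^ aj i * (X + 1) ^ bj i : Polynomial (ZMod 2)) ≠
        1 + X ^ aj j * (X + 1) ^ bj j)
    (hfact : sigmaPow M (2 * h) = ∏ j ∈ J, (1 + X ^ aj j * (X + 1) ^ bj j))
    (u v : ℕ) (hu : u = ∑ j ∈ J, aj j) (hv : v = ∑ j ∈ J, bj j)
    (U W R : Polynomial (ZMod 2)) (c : ℕ)
    (hU : U = X ^ u * (X + 1) ^ v)
    (hW : W = U + sigmaPow M (2 * h) + 1)
    (hc : c = 2 * h * (a + b) - W.natDegree)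
    (hR : R = sigmaPow M (2 * h - 1) + W)
    (hW0 : W ≠ 0) (hceven : Even c)
    (m : ℕ) (hmodd : Odd m) (hmpos : 0 < m) (hmW : alpha m W = 1)
    (hmleast : ∀ k, Odd k → 0 < k → alpha k W = 1 → m ≤ k)
    (hcab : c < a + b) (habeven : Even (a + b)) (hcm : a + b + 1 < c + m) :
    alpha (a + b - c + 1) R = 1 := by
  -- notation
  obtain ⟨g, hg⟩ : ∃ g, 2 * h = g + 2 := ⟨2 * h - 2, by omega⟩
  have hg1 : 2 * h - 1 = g + 1 := by omega
  set d := a + b with hd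
  -- b is odd
  have hbodd : Odd b := by
    by_contra hbe
    rw [Nat.not_odd_iff_even] at hbe
    have hae : Even a := (Nat.even_add.mp habeven).mpr hbe
    obtain ⟨a', ha'⟩ := hae
    obtain ⟨b', hb'⟩ := hbe
    set Q : Polynomial (ZMod 2) := 1 + X ^ a' * (X + 1) ^ b' with hQ
    have hMQ : M = Q * Q := by
      have h2 : (2 : Polynomial (ZMod 2)) = 0 := CharTwo.two_eq_zero
      have hqq : Q * Q = 1 + 2 * (X ^ a' * (X + 1) ^ b') + (X ^ a' * (X + 1) ^ b') ^ 2 := by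
        rw [hQ]; ring
      rw [hM, hqq, h2, zero_mul, add_zero, mul_pow, ← pow_mul, ← pow_mul,
        show a' * 2 = a by omega, show b' * 2 = b by omega]
    rcases hMirr.isUnit_or_isUnit hMQ with h1 | h1 <;>
    · have := natDegree_eq_zero_of_isUnit h1
      rw [hQ, mersDeg a' b' (by omega)] at this
      omega
  -- basic degree facts
  have hMd : M.natDegree = d := by rw [hM]; exact mersDeg a b (by omega)
  have hMm : M.Monic := by rw [hM]; exact mersMonic a b (by omega)
  have hMd1 : 1 ≤ M.natDegree := by omega
  have hs2h : (sigmaPow M (2 * h)).natDegree = (g + 2) * d := by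
    rw [sigma_deg M hMm hMd1, hMd, hg]
  -- u + v
  have huv : u + v = (g + 2) * d := by
    have h1 : (∏ j ∈ J, (1 + X ^ aj j * (X + 1) ^ bj j : Polynomial (ZMod 2))).natDegree
        = ∑ j ∈ J, (aj j + bj j) := by
      rw [natDegree_prod_of_monic _ _ (fun j hj => mersMonic _ _ (by have := haj j hj; omega))]
      exact Finset.sum_congr rfl fun j hj => mersDeg _ _ (by have := haj j hj; omega)
    rw [hu, hv, ← Finset.sum_add_distrib, ← h1, ← hfact, hs2h]
  have hUd : U.natDegree = (g + 2) * d := by rw [hU, degXaXb]; exact huv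
  -- degree of W
  have hWle : W.natDegree ≤ (g + 2) * d := by
    rw [hW]
    refine le_trans (natDegree_add_le _ _) ?_
    rw [natDegree_one]
    refine max_le (le_trans (natDegree_add_le _ _) ?_) (by omega)
    rw [hUd, hs2h]; omega
  have hNW : 2 * h * (a + b) = (g + 2) * d := by rw [hg]
  have hWd : W.natDegree = (g + 2) * d - c := by
    rw [hNW] at hc; omega
  have hcle : c ≤ (g + 2) * d := by rw [hNW] at hc; omega
  -- the key coefficient index
  have e1 : (g + 2) * d = g * d + 2 * d := by ring
  have e2 : (g + 1) * d = g * d + d := by ring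
  -- coefficient of M^(g+1) at g*d + d - 1 is 1
  have hcM : M.coeff (d - 1) = 1 := by
    rw [hM, show d - 1 = a + (b - 1) by omega, mersCoeff a b (b - 1) (by omega),
      show b - 1 = b - 1 from rfl, Nat.choose_symm hb, Nat.choose_one_right]
    exact oddCast b hbodd
  have hpowd : (M ^ (g + 1)).natDegree = g * d + d := by
    rw [natDegree_pow, hMd, e2]
  have hnext : (M ^ (g + 1)).coeff (g * d + d - 1) = 1 := by
    have h1 := hMm.nextCoeff_pow (g + 1)
    rw [nextCoeff_of_natDegree_pos (by rw [hpowd]; omega),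
      nextCoeff_of_natDegree_pos (by omega), hpowd, hMd, hcM] at h1
    rw [h1, nsmul_eq_mul, mul_one]
    exact oddCast (g + 1) (by
      have : Odd (2 * h - 1) := by
        rw [Nat.odd_iff]; omega
      rwa [hg1] at this)
  -- coefficient of sigmaPow M (g+1) at g*d + d - 1
  have hsc : (sigmaPow M (g + 1)).coeff (g * d + d - 1) = 1 := by
    rw [sigma_coeff_high M hMm hMd1 (g + 1) _ (by omega)
      (by rw [hMd]; simp only [Nat.add_sub_cancel]; omega)]
    exact hnext
  -- coefficient of W at g*d + d - 1 is 0
  have hWc : W.coeff (g * d + d - 1) = 0 := by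
    have hodd : Odd (d + 1 - c) := by
      obtain ⟨c', hc'⟩ := hceven
      obtain ⟨d', hd'⟩ := habeven
      rw [Nat.odd_iff]; omega
    have hlt : d + 1 - c < m := by omega
    have h0 : alpha (d + 1 - c) W = 0 := by
      refine zmod2cases _ fun h1 => ?_
      have := hmleast (d + 1 - c) hodd (by omega) h1
      omega
    have hidx : W.natDegree - (d + 1 - c) = g * d + d - 1 := by
      rw [hWd]; omega
    rwa [alpha, hidx] at h0
  -- degree of R
  have hRd : R.natDegree = (g + 2) * d - c := by
    rw [hR, natDegree_add_eq_right_of_natDegree_lt, hWd]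
    rw [hWd, sigma_deg M hMm hMd1, hMd, hg1, e2]; omega
  -- conclude
  have hidx2 : R.natDegree - (d - c + 1) = g * d + d - 1 := by
    rw [hRd]; omega
  rw [alpha, show a + b - c + 1 = d - c + 1 from rfl, hidx2, hR, hg1, coeff_add, hsc, hWc,
    add_zero]
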